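/- If G is a periodic group variety and F is a combinatorial semigroup variety, then Gr(G ∨ F) = G. -/

import Mathlib

/-!
Formalization framework: semigroup varieties as Galois-closed equational theories
over the free semigroup on countably many letters.  A variety is represented by
its equational theory; the order `V ≤ W` ("V is a subvariety of W") is reverse
inclusion of theories.  `Com` is the lattice of commutative semigroup varieties,
realized as the subtype of varieties whose theory contains the commutative law.
-/

open FreeSemigroup

/-- Words: elements of the free semigroup over a countably infinite alphabet. -/
abbrev Word : Type := FreeSemigroup ℕ

/-- A semigroup identity `u = v`. -/
abbrev SgId : Type := Word × Word

/-- `spow a n = a ^ (n + 1)` in any (multiplicative) semigroup. -/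
def spow {M : Type*} [Mul M] (a : M) : ℕ → M
  | 0 => a
  | n + 1 => a * spow a n

/-- A semigroup `S` satisfies the identity `e.1 = e.2`. -/
def SatS (S : Type) [Semigroup S] (e : SgId) : Prop :=
  ∀ σ : ℕ → S, FreeSemigroup.lift σ e.1 = FreeSemigroup.lift σ e.2

/-- `S` is a model of the set of identities `E`. -/
def Models (S : Type) [Semigroup S] (E : Set SgId) : Prop :=
  ∀ e ∈ E, SatS S e

/-- The equational theory generated by `E`: all identities holding in every
model of `E` (by Birkhoff's theorem this is exactly deductive closure). -/
def eqTh (E : Set SgId) : Set SgId :=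
  { e | ∀ (S : Type) [Semigroup S], Models S E → SatS S e }

theorem subset_eqTh (E : Set SgId) : E ⊆ eqTh E := by
  intro e he S _ hS
  exact hS e he

theorem eqTh_mono {E F : Set SgId} (h : E ⊆ F) : eqTh E ⊆ eqTh F := by
  intro e he S _ hS
  exact he S fun e' he' => hS e' (h he')

theorem eqTh_idem (E : Set SgId) : eqTh (eqTh E) = eqTh E := by
  refine Set.Subset.antisymm ?_ (subset_eqTh _)
  intro e he S _ hS
  exact he S fun e' he' => he' S hS

/-- A semigroup variety, given by its (Galois-closed) equational theory. -/
structure SgVariety where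
  th : Set SgId
  closed : eqTh th = th

theorem SgVariety.ext' {V W : SgVariety} (h : V.th = W.th) : V = W := by
  cases V; cases W; cases h; rfl

/-- The variety defined by a set of identities. -/
def varOf (E : Set SgId) : SgVariety :=
  ⟨eqTh E, eqTh_idem E⟩

/-- `V ≤ W` iff `V` is a subvariety of `W`, i.e. the theory of `W` is contained
in the theory of `V`. -/
instance : PartialOrder SgVariety where
  le V W := W.th ⊆ V.th
  le_refl V := Set.Subset.refl _
  le_trans a b c h1 h2 := Set.Subset.trans h2 h1
  le_antisymm a b h1 h2 := SgVariety.ext' (Set.Subset.antisymm h2 h1)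

/-- The lattice **SEM** of all semigroup varieties: join is intersection of
theories; meet is the variety defined by the union of the theories. -/
instance : Lattice SgVariety :=
  { (inferInstance : PartialOrder SgVariety) with
    sup := fun V W =>
      ⟨V.th ∩ W.th, by
        refine Set.Subset.antisymm (Set.subset_inter ?_ ?_) (subset_eqTh _)
        · exact (eqTh_mono Set.inter_subset_left).trans (le_of_eq V.closed)
        · exact (eqTh_mono Set.inter_subset_right).trans (le_of_eq W.closed)⟩
    le_sup_left := fun V W => Set.inter_subset_left
    le_sup_right := fun V W => Set.inter_subset_right
    sup_le := fun V W U h1 h2 => Set.subset_inter h1 h2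
    inf := fun V W => varOf (V.th ∪ W.th)
    inf_le_left := fun V W => Set.subset_union_left.trans (subset_eqTh _)
    inf_le_right := fun V W => Set.subset_union_right.trans (subset_eqTh _)
    le_inf := fun U V W h1 h2 =>
      (eqTh_mono (Set.union_subset h1 h2)).trans (le_of_eq U.closed) }

/-- The letters `x`, `y`, `z`. -/
def xw : Word := FreeSemigroup.of 0
def yw : Word := FreeSemigroup.of 1
def zw : Word := FreeSemigroup.of 2

/-- The commutative law `xy = yx`. -/
def commId : SgId := (xw * yw, yw * xw)

/-- The lattice **Com**: commutative semigroup varieties. -/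
abbrev ComVariety : Type := { V : SgVariety // commId ∈ V.th }

instance : Lattice ComVariety :=
  { (inferInstance : PartialOrder ComVariety) with
    sup := fun V W => ⟨V.1 ⊔ W.1, ⟨V.2, W.2⟩⟩
    le_sup_left := fun V W => @le_sup_left SgVariety _ V.1 W.1
    le_sup_right := fun V W => @le_sup_right SgVariety _ V.1 W.1
    sup_le := fun V W U h1 h2 => @sup_le SgVariety _ V.1 W.1 U.1 h1 h2
    inf := fun V W => ⟨V.1 ⊓ W.1, subset_eqTh _ (Set.mem_union_left _ V.2)⟩
    inf_le_left := fun V W => @inf_le_left SgVariety _ V.1 W.1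
    inf_le_right := fun V W => @inf_le_right SgVariety _ V.1 W.1
    le_inf := fun U V W h1 h2 => @le_inf SgVariety _ U.1 V.1 W.1 h1 h2 }

/-- The trivial variety `T`. -/
def trivialVar : SgVariety := varOf Set.univ

/-- The variety `COM` of all commutative semigroups. -/
def COMvar : SgVariety := varOf {commId}

/-- The variety `SL` of semilattices. -/
def SLvar : SgVariety := varOf {commId, (xw * xw, xw)}

/-- `C_m = var{xᵐ = xᵐ⁺¹, xy = yx}` for `m ≥ 1`, and `C_0 = T`. -/
def Cvar : ℕ → SgVariety
  | 0 => trivialVar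
  | m + 1 => varOf {commId, (spow xw m, spow xw (m + 1))}

def Tcom : ComVariety := ⟨trivialVar, subset_eqTh _ (Set.mem_univ _)⟩
def COMcom : ComVariety := ⟨COMvar, subset_eqTh _ rfl⟩
def SLcom : ComVariety := ⟨SLvar, subset_eqTh _ (Set.mem_insert _ _)⟩
def Ccom (m : ℕ) : ComVariety :=
  ⟨Cvar m, by
    cases m with
    | zero => exact subset_eqTh _ (Set.mem_univ _)
    | succ m => exact subset_eqTh _ (Set.mem_insert _ _)⟩

/-- A semigroup (nonempty, with the given multiplication) is a group. -/
def IsGroupS (S : Type) [Semigroup S] : Prop :=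
  ∃ e : S, (∀ a : S, e * a = a ∧ a * e = a) ∧ ∀ a : S, ∃ b : S, a * b = e ∧ b * a = e

/-- A nilsemigroup: there is a zero element and some power of every element is zero. -/
def IsNilS (S : Type) [Semigroup S] : Prop :=
  ∃ z : S, (∀ a : S, z * a = z ∧ a * z = z) ∧ ∀ a : S, ∃ n : ℕ, spow a n = z

/-- A group variety: all its (nonempty) members are groups. -/
def IsGroupVariety (V : SgVariety) : Prop :=
  ∀ (S : Type) [Semigroup S], Nonempty S → Models S V.th → IsGroupS S

/-- A nil-variety: all its (nonempty) members are nilsemigroups. -/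
def IsNilVariety (V : SgVariety) : Prop :=
  ∀ (S : Type) [Semigroup S], Nonempty S → Models S V.th → IsNilS S

/-- A combinatorial variety: all groups in it are singletons. -/
def IsCombinatorial (V : SgVariety) : Prop :=
  ∀ (S : Type) [Semigroup S], Models S V.th → IsGroupS S → Subsingleton S

/-- A periodic variety: satisfies `xⁿ = xⁿ⁺ᵏ` for some `n, k ≥ 1`. -/
def IsPeriodic (V : SgVariety) : Prop :=
  ∃ n k : ℕ, (spow xw n, spow xw (n + k + 1)) ∈ V.th

/-- The letter `k` occurs in the word `w`. -/
def occursIn (k : ℕ) (w : Word) : Prop := k = w.head ∨ k ∈ w.tail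

/-- `S` satisfies the identity `w = 0` (i.e. the system `wx = xw = w`, `x` fresh):
every value of `w` in `S` is a (two-sided) zero element. -/
def SatZeroS (S : Type) [Semigroup S] (w : Word) : Prop :=
  ∀ (σ : ℕ → S) (a : S),
    FreeSemigroup.lift σ w * a = FreeSemigroup.lift σ w ∧
      a * FreeSemigroup.lift σ w = FreeSemigroup.lift σ w

/-- The variety `V` satisfies the identity `w = 0`. -/
def VSatZero (V : SgVariety) (w : Word) : Prop :=
  ∀ (S : Type) [Semigroup S], Models S V.th → SatZeroS S w

/-- The words `x²`, `x³`, `x²y`, `xy²`, `x²yz`. -/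
def w_xx : Word := xw * xw
def w_xxx : Word := xw * xw * xw
def w_xxy : Word := xw * xw * yw
def w_xyy : Word := xw * yw * yw
def w_xxyz : Word := xw * xw * yw * zw

/-- The identity `x²y = xy²`. -/
def idQ : SgId := (w_xxy, w_xyy)

/-- The pair of identities expressing `w = 0`, with `k` a fresh letter. -/
def zeroPair (w : Word) (k : ℕ) : Set SgId :=
  {(w * FreeSemigroup.of k, w), (FreeSemigroup.of k * w, w)}

/-- `xprodTo n = x₁x₂⋯xₙ` (for `n ≥ 1`), on the letters `0, …, n-1`. -/
def xprodTo : ℕ → Word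
  | 0 => FreeSemigroup.of 0
  | 1 => FreeSemigroup.of 0
  | n + 2 => xprodTo (n + 1) * FreeSemigroup.of (n + 1)

/-- `I = var{x²y = xy², x²yz = 0, xy = yx}`. -/
def Ivar : SgVariety := varOf ({commId, idQ} ∪ zeroPair w_xxyz 3)

/-- `K = var{x²y = 0, xy = yx}`. -/
def Kvar : SgVariety := varOf ({commId} ∪ zeroPair w_xxy 2)

/-- `L = var{x² = 0, xy = yx}`. -/
def Lvar : SgVariety := varOf ({commId} ∪ zeroPair w_xx 1)

/-- `I_n = var{x²yz = x₁⋯xₙ = 0, x²y = xy², xy = yx}`. -/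
def Ivarn (n : ℕ) : SgVariety :=
  varOf ({commId, idQ} ∪ zeroPair w_xxyz 3 ∪ zeroPair (xprodTo n) n)

/-- `J = var{x²yz = x³ = 0, x²y = xy², xy = yx}`. -/
def Jvar : SgVariety := varOf ({commId, idQ} ∪ zeroPair w_xxyz 3 ∪ zeroPair w_xxx 1)

/-- `J_n = var{x²yz = x³ = x₁⋯xₙ = 0, x²y = xy², xy = yx}`. -/
def Jvarn (n : ℕ) : SgVariety :=
  varOf ({commId, idQ} ∪ zeroPair w_xxyz 3 ∪ zeroPair w_xxx 1 ∪ zeroPair (xprodTo n) n)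

/-- `K_n = var{x²y = x₁⋯xₙ = 0, xy = yx}`. -/
def Kvarn (n : ℕ) : SgVariety :=
  varOf ({commId} ∪ zeroPair w_xxy 2 ∪ zeroPair (xprodTo n) n)

/-- `L_n = var{x² = x₁⋯xₙ = 0, xy = yx}`. -/
def Lvarn (n : ℕ) : SgVariety :=
  varOf ({commId} ∪ zeroPair w_xx 1 ∪ zeroPair (xprodTo n) n)

/-- Generators of `ZR(U)`: the commutative law together with all 0-reduced
identities (in the form of the corresponding identity pairs) holding in `U`. -/
def ZRgen (U : SgVariety) : Set SgId :=
  {commId} ∪ { e : SgId | ∃ (w : Word) (k : ℕ), ¬ occursIn k w ∧ VSatZero U w ∧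
      (e = (w * FreeSemigroup.of k, w) ∨ e = (FreeSemigroup.of k * w, w)) }

/-- `ZR(U)`: the variety given by the commutative law and all 0-reduced
identities holding in `U`. -/
def ZRvar (U : SgVariety) : SgVariety := varOf (ZRgen U)

def Icom : ComVariety := ⟨Ivar, subset_eqTh _ (Set.mem_union_left _ (Set.mem_insert _ _))⟩

def ZRcom (U : SgVariety) : ComVariety :=
  ⟨ZRvar U, subset_eqTh _ (Set.mem_union_left _ rfl)⟩

/-- All nilsemigroups in `V` are nilpotent of degree ≤ n, i.e. satisfy `x₁⋯xₙ = 0`. -/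
def HasDegLe (V : SgVariety) (n : ℕ) : Prop :=
  ∀ (S : Type) [Semigroup S], Nonempty S → Models S V.th → IsNilS S → SatZeroS S (xprodTo n)

/-- `deg V = d` (with `d = ⊤` meaning infinite degree). -/
def DegIs (V : SgVariety) (d : ℕ∞) : Prop :=
  (∃ n : ℕ, 0 < n ∧ d = (n : ℕ∞) ∧ IsLeast {m : ℕ | 0 < m ∧ HasDegLe V m} n) ∨
    (d = ⊤ ∧ ∀ n : ℕ, 0 < n → ¬ HasDegLe V n)

/-- Upper-modular element of a lattice. -/
def IsUpperModular {L : Type*} [Lattice L] (a : L) : Prop :=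
  ∀ b c : L, b ≤ a → a ⊓ (b ⊔ c) = b ⊔ (a ⊓ c)

/-- Codistributive element of a lattice. -/
def IsCodistributive {L : Type*} [Lattice L] (a : L) : Prop :=
  ∀ b c : L, a ⊓ (b ⊔ c) = (a ⊓ b) ⊔ (a ⊓ c)

/-- Costandard element of a lattice. -/
def IsCostandard {L : Type*} [Lattice L] (a : L) : Prop :=
  ∀ b c : L, (a ⊓ b) ⊔ c = (a ⊔ c) ⊓ (b ⊔ c)

/-- Modular element of a lattice. -/
def IsModularElt {L : Type*} [Lattice L] (a : L) : Prop :=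
  ∀ b c : L, b ≤ c → (a ⊔ b) ⊓ c = (a ⊓ c) ⊔ b

/-- Neutral element of a lattice, via the median characterization
(equivalent to: every triple containing `a` generates a distributive
sublattice; Grätzer, "Lattice Theory: Foundation", Theorem 254). -/
def IsNeutralElt {L : Type*} [Lattice L] (a : L) : Prop :=
  ∀ b c : L, (a ⊓ b) ⊔ (b ⊓ c) ⊔ (c ⊓ a) = (a ⊔ b) ⊓ (b ⊔ c) ⊓ (c ⊔ a)

section AuxSpow

variable {M : Type*} [Semigroup M] {N : Type*} [Semigroup N]

theorem spow_add (a : M) (m n : ℕ) : spow a (m + n + 1) = spow a m * spow a n := by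
  induction m with
  | zero => rw [Nat.zero_add]; rfl
  | succ m ih =>
      have h1 : m + 1 + n + 1 = (m + n + 1) + 1 := by omega
      rw [h1]
      show a * spow a (m + n + 1) = (a * spow a m) * spow a n
      rw [ih, mul_assoc]

theorem spow_succ_right (a : M) (m : ℕ) : spow a (m + 1) = spow a m * a := by
  induction m with
  | zero => rfl
  | succ m ih =>
      show a * spow a (m + 1) = (a * spow a m) * a
      rw [ih, mul_assoc]

theorem map_spow (f : M →ₙ* N) (a : M) (m : ℕ) : f (spow a m) = spow (f a) m := by
  induction m with
  | zero => rfl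
  | succ m ih => show f (a * spow a m) = f a * spow (f a) m; rw [map_mul, ih]

theorem spow_index_congr (a : M) {m n : ℕ} (h : m = n) : spow a m = spow a n := by rw [h]

end AuxSpow

section AuxLift

open FreeSemigroup

theorem lift_spow_xw {S : Type*} [Semigroup S] (σ : ℕ → S) (m : ℕ) :
    FreeSemigroup.lift σ (spow xw m) = spow (σ 0) m := by
  rw [map_spow]; rfl

theorem lift_lift {S : Type*} [Semigroup S] (σ : ℕ → S) (τ : ℕ → Word) (w : Word) :
    FreeSemigroup.lift σ (FreeSemigroup.lift τ w) =
      FreeSemigroup.lift (fun i => FreeSemigroup.lift σ (τ i)) w := by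
  induction w using FreeSemigroup.recOnMul with
  | ih1 i => rfl
  | ih2 x y ihx ihy => simp only [map_mul, ihx, ihy]

/-- Substitution closedness of a variety's theory. -/
theorem mem_subst {V : SgVariety} {u v : Word} (h : (u, v) ∈ V.th) (τ : ℕ → Word) :
    (FreeSemigroup.lift τ u, FreeSemigroup.lift τ v) ∈ V.th := by
  rw [← V.closed]
  intro S _ hS σ
  show FreeSemigroup.lift σ (FreeSemigroup.lift τ u) = _
  rw [lift_lift, lift_lift]
  exact hS _ h _

/-- One-variable identities hold pointwise. -/
theorem mem_one_var {V : SgVariety} {i j : ℕ} :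
    (spow xw i, spow xw j) ∈ V.th ↔
      ∀ (S : Type) [Semigroup S], Models S V.th → ∀ s : S, spow s i = spow s j := by
  constructor
  · intro h S _ hS s
    have := hS _ h (fun _ => s)
    simpa [lift_spow_xw] using this
  · intro h
    rw [← V.closed]
    intro S _ hS σ
    show FreeSemigroup.lift σ (spow xw i) = FreeSemigroup.lift σ (spow xw j)
    rw [lift_spow_xw, lift_spow_xw]
    exact h S hS _

end AuxLift
section QuotientConstruction

open FreeSemigroup

variable (F : SgVariety)

/-- The one-variable relation of `F`: `x^{i+1} = x^{j+1}` holds in `F`. -/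
def relF (i j : ℕ) : Prop := (spow xw i, spow xw j) ∈ F.th

theorem relF_equiv : Equivalence (relF F) := by
  constructor
  · intro i
    rw [relF, mem_one_var]; intro S _ _ s; rfl
  · intro i j h
    rw [relF, mem_one_var] at h ⊢
    intro S _ hS s; exact (h S hS s).symm
  · intro i j k h1 h2
    rw [relF, mem_one_var] at h1 h2 ⊢
    intro S _ hS s; exact (h1 S hS s).trans (h2 S hS s)

theorem relF_add {i j : ℕ} (h : relF F i j) (d : ℕ) : relF F (i + d) (j + d) := by
  rw [relF, mem_one_var] at h ⊢
  intro S _ hS s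
  induction d with
  | zero => exact h S hS s
  | succ d ih =>
      show s * spow s (i + d) = s * spow s (j + d)
      rw [ih]

/-- The setoid on `ℕ` induced by one-variable identities of `F`. -/
def setoidF : Setoid ℕ := ⟨relF F, relF_equiv F⟩

/-- The free monogenic semigroup of `F` (index `i` stands for `x^{i+1}`). -/
def QS : Type := Quotient (setoidF F)

/-- Class of `i` in `QS F`. -/
def QSmk (i : ℕ) : QS F := Quotient.mk (setoidF F) i

instance : Mul (QS F) :=
  ⟨Quotient.map₂ (fun i j => i + j + 1) (by
    intro a₁ a₂ h1 b₁ b₂ h2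
    have h1' : relF F a₁ a₂ := h1
    have h2' : relF F b₁ b₂ := h2
    show relF F (a₁ + b₁ + 1) (a₂ + b₂ + 1)
    rw [relF, mem_one_var] at h1' h2' ⊢
    intro S _ hS s
    rw [spow_add, spow_add, h1' S hS s, h2' S hS s])⟩

theorem QSmk_mul (i j : ℕ) : QSmk F i * QSmk F j = QSmk F (i + j + 1) := rfl

instance : Semigroup (QS F) where
  mul_assoc a b c := by
    induction a using Quotient.inductionOn with | _ i =>
    induction b using Quotient.inductionOn with | _ j =>
    induction c using Quotient.inductionOn with | _ k =>
    show QSmk F (i + j + 1) * QSmk F k = QSmk F i * QSmk F (j + k + 1)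
    rw [QSmk_mul, QSmk_mul]
    exact congrArg (QSmk F) (by omega)

theorem QS_models : Models (QS F) F.th := by
  intro e he σ
  have key : ∀ w : Word, ∃ d : ℕ,
      FreeSemigroup.lift (fun i => spow xw (σ i).out) w = spow xw d ∧
        FreeSemigroup.lift σ w = QSmk F d := by
    intro w
    induction w using FreeSemigroup.recOnMul with
    | ih1 i =>
        refine ⟨(σ i).out, rfl, ?_⟩
        show σ i = QSmk F (σ i).out
        exact (Quotient.out_eq (σ i)).symm
    | ih2 x y ihx ihy =>
        obtain ⟨d₁, hx1, hx2⟩ := ihx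
        obtain ⟨d₂, hy1, hy2⟩ := ihy
        refine ⟨d₁ + d₂ + 1, ?_, ?_⟩
        · rw [map_mul, hx1, hy1, spow_add]
        · rw [map_mul, hx2, hy2, QSmk_mul]
  obtain ⟨d₁, h11, h12⟩ := key e.1
  obtain ⟨d₂, h21, h22⟩ := key e.2
  rw [h12, h22]
  have hsub := mem_subst (V := F) (u := e.1) (v := e.2) he (fun i => spow xw (σ i).out)
  rw [h11, h21] at hsub
  exact Quotient.sound hsub

end QuotientConstruction
section Content

open FreeSemigroup

/-- The content (letter multiset, as a finitely supported function) of a word. -/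
noncomputable def cntW (w : Word) : ℕ →₀ ℕ :=
  Multiplicative.toAdd
    (FreeSemigroup.lift (fun i => Multiplicative.ofAdd (Finsupp.single i 1)) w)

theorem cntW_of (j : ℕ) : cntW (FreeSemigroup.of j) = Finsupp.single j 1 := rfl

theorem cntW_mul (u v : Word) : cntW (u * v) = cntW u + cntW v := by
  unfold cntW; rw [map_mul]; rfl

/-- Evaluation of a word in a commutative monoid via its content. -/
theorem lift_eq_cnt_prod {M : Type} [CommMonoid M] (σ : ℕ → M) (w : Word) :
    FreeSemigroup.lift σ w = (cntW w).prod (fun i n => σ i ^ n) := by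
  induction w using FreeSemigroup.recOnMul with
  | ih1 j =>
      rw [cntW_of]
      show σ j = _
      rw [Finsupp.prod_single_index (by simp), pow_one]
  | ih2 x y ihx ihy =>
      rw [map_mul, ihx, ihy, cntW_mul,
        Finsupp.prod_add_index (by simp) (by intro a _ m n; rw [pow_add])]

theorem lift_const_xw (w : Word) :
    ∃ d : ℕ, FreeSemigroup.lift (fun _ => xw) w = spow xw d ∧ d + 1 = w.length := by
  induction w using FreeSemigroup.recOnMul with
  | ih1 j => exact ⟨0, rfl, rfl⟩
  | ih2 x y ihx ihy =>
      obtain ⟨d₁, hx1, hx2⟩ := ihx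
      obtain ⟨d₂, hy1, hy2⟩ := ihy
      refine ⟨d₁ + d₂ + 1, ?_, ?_⟩
      · rw [map_mul, hx1, hy1, spow_add]
      · rw [FreeSemigroup.length_mul]; omega

theorem lift_double_at (i : ℕ) (w : Word) :
    ∃ d : ℕ, FreeSemigroup.lift (fun j => if j = i then xw * xw else xw) w = spow xw d ∧
      d + 1 = w.length + cntW w i := by
  induction w using FreeSemigroup.recOnMul with
  | ih1 j =>
      by_cases hji : j = i
      · subst hji
        refine ⟨1, ?_, ?_⟩
        · show (if j = j then xw * xw else xw) = spow xw 1
          rw [if_pos rfl]; rfl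
        · rw [cntW_of, FreeSemigroup.length_of, Finsupp.single_eq_same]
      · refine ⟨0, ?_, ?_⟩
        · show (if j = i then xw * xw else xw) = spow xw 0
          rw [if_neg hji]; rfl
        · simp [cntW_of, Finsupp.single_apply, hji]
  | ih2 x y ihx ihy =>
      obtain ⟨d₁, hx1, hx2⟩ := ihx
      obtain ⟨d₂, hy1, hy2⟩ := ihy
      refine ⟨d₁ + d₂ + 1, ?_, ?_⟩
      · rw [map_mul, hx1, hy1, spow_add]
      · rw [FreeSemigroup.length_mul, cntW_mul, Finsupp.add_apply]; omega

end Content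
section Aperiodic

open FreeSemigroup

/-- Every combinatorial variety satisfies an identity `x^{c+1} = x^{c+2}`. -/
theorem exists_aperiodic (F : SgVariety) (hF : IsCombinatorial F) :
    ∃ c : ℕ, (spow xw c, spow xw (c + 1)) ∈ F.th := by
  by_cases hcase : ∀ i j : ℕ, relF F i j → i = j
  · -- then `Multiplicative ℤ` is a nontrivial group in `F`, contradiction
    exfalso
    have hmod : Models (Multiplicative ℤ) F.th := by
      intro e he σ
      have hlen : e.1.length = e.2.length := by
        obtain ⟨d₁, h11, h12⟩ := lift_const_xw e.1
        obtain ⟨d₂, h21, h22⟩ := lift_const_xw e.2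
        have hsub := mem_subst (V := F) he (fun _ => xw)
        rw [h11, h21] at hsub
        have := hcase d₁ d₂ hsub
        omega
      have hcnt : cntW e.1 = cntW e.2 := by
        ext i
        obtain ⟨d₁, h11, h12⟩ := lift_double_at i e.1
        obtain ⟨d₂, h21, h22⟩ := lift_double_at i e.2
        have hsub := mem_subst (V := F) he (fun j => if j = i then xw * xw else xw)
        rw [h11, h21] at hsub
        have := hcase d₁ d₂ hsub
        omega
      rw [lift_eq_cnt_prod, lift_eq_cnt_prod, hcnt]
    have hgrp : IsGroupS (Multiplicative ℤ) :=
      ⟨1, fun a => ⟨one_mul a, mul_one a⟩,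
        fun a => ⟨a⁻¹, by simp, by simp⟩⟩
    have hsing := hF _ hmod hgrp
    have h01 : Multiplicative.ofAdd (0 : ℤ) = Multiplicative.ofAdd (1 : ℤ) :=
      hsing.elim _ _
    have : (0 : ℤ) = 1 := by simpa using congrArg Multiplicative.toAdd h01
    exact zero_ne_one this
  · push_neg at hcase
    obtain ⟨i₀, j₀, hrel, hne⟩ := hcase
    obtain ⟨m, q, hq0, hmq⟩ : ∃ m q : ℕ, 0 < q ∧ relF F m (m + q) := by
      rcases Nat.lt_or_ge i₀ j₀ with h | h
      · refine ⟨i₀, j₀ - i₀, by omega, ?_⟩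
        rwa [show i₀ + (j₀ - i₀) = j₀ from by omega]
      · have h' : j₀ < i₀ := by omega
        refine ⟨j₀, i₀ - j₀, by omega, ?_⟩
        rw [show j₀ + (i₀ - j₀) = i₀ from by omega]
        exact (relF_equiv F).symm hrel
    -- step and reduction lemmas in `QS F`
    have hstep : ∀ i, m ≤ i → QSmk F i = QSmk F (i + q) := by
      intro i him
      apply Quotient.sound
      have h := relF_add F hmq (i - m)
      rw [show m + (i - m) = i from by omega,
        show m + q + (i - m) = i + q from by omega] at h
      exact h
    have hred : ∀ i, m ≤ i → ∀ t, QSmk F i = QSmk F (i + t * q) := by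
      intro i him t
      induction t with
      | zero => exact congrArg (QSmk F) (by ring)
      | succ t ih =>
          rw [ih, hstep (i + t * q) (by omega)]
          exact congrArg (QSmk F) (by ring)
    obtain ⟨P, hPdef, hP1⟩ : ∃ P, P = (m + 1) * q ∧ m + 1 ≤ P :=
      ⟨(m + 1) * q, rfl, Nat.le_mul_of_pos_right (m + 1) hq0⟩
    -- the kernel subsemigroup
    let S₀ : Subsemigroup (QS F) :=
      { carrier := {x | ∃ i, m ≤ i ∧ x = QSmk F i}
        mul_mem' := by
          rintro a b ⟨i, him, rfl⟩ ⟨j, hjm, rfl⟩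
          exact ⟨i + j + 1, by omega, (QSmk_mul F i j).symm⟩ }
    have hmodK : Models ↥S₀ F.th := by
      intro e he σ
      have hcomm : ∀ w : Word, ((FreeSemigroup.lift σ w : ↥S₀) : QS F) =
          FreeSemigroup.lift (fun i => ((σ i : ↥S₀) : QS F)) w := by
        intro w
        induction w using FreeSemigroup.recOnMul with
        | ih1 i => rfl
        | ih2 x y ihx ihy =>
            rw [map_mul, map_mul, ← ihx, ← ihy]; rfl
      have h := QS_models F e he (fun i => ((σ i : ↥S₀) : QS F))
      rw [← hcomm, ← hcomm] at h
      exact Subtype.coe_injective h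
    have hgrpK : IsGroupS ↥S₀ := by
      refine ⟨⟨QSmk F (P - 1), P - 1, by omega, rfl⟩, ?_, ?_⟩
      · rintro ⟨a, i, him, rfl⟩
        constructor
        · apply Subtype.coe_injective
          show QSmk F (P - 1) * QSmk F i = QSmk F i
          rw [QSmk_mul, show P - 1 + i + 1 = i + (m + 1) * q from by omega]
          exact (hred i him (m + 1)).symm
        · apply Subtype.coe_injective
          show QSmk F i * QSmk F (P - 1) = QSmk F i
          rw [QSmk_mul, show i + (P - 1) + 1 = i + (m + 1) * q from by omega]
          exact (hred i him (m + 1)).symm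
      · rintro ⟨a, i, him, rfl⟩
        obtain ⟨Pi, hPidef, hPi1⟩ : ∃ Pi, Pi = (i + 1) * q ∧ i + 1 ≤ Pi :=
          ⟨(i + 1) * q, rfl, Nat.le_mul_of_pos_right (i + 1) hq0⟩
        refine ⟨⟨QSmk F (P - 1 + Pi - (i + 1)), P - 1 + Pi - (i + 1), by omega, rfl⟩, ?_, ?_⟩
        · apply Subtype.coe_injective
          show QSmk F i * QSmk F (P - 1 + Pi - (i + 1)) = QSmk F (P - 1)
          rw [QSmk_mul, show i + (P - 1 + Pi - (i + 1)) + 1 = P - 1 + (i + 1) * q from by omega]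
          exact (hred (P - 1) (by omega) (i + 1)).symm
        · apply Subtype.coe_injective
          show QSmk F (P - 1 + Pi - (i + 1)) * QSmk F i = QSmk F (P - 1)
          rw [QSmk_mul, show P - 1 + Pi - (i + 1) + i + 1 = P - 1 + (i + 1) * q from by omega]
          exact (hred (P - 1) (by omega) (i + 1)).symm
    have hsing := hF ↥S₀ hmodK hgrpK
    have heq : (⟨QSmk F m, m, le_refl m, rfl⟩ : ↥S₀) =
        ⟨QSmk F (m + 1), m + 1, by omega, rfl⟩ := hsing.elim _ _
    have h2 : QSmk F m = QSmk F (m + 1) := congrArg Subtype.val heq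
    exact ⟨m, Quotient.exact h2⟩

end Aperiodic
section GroupHelpers

variable {S : Type*} [Semigroup S] {E : S}

theorem grp_cancel_left (hE : ∀ a : S, E * a = a ∧ a * E = a)
    (hinv : ∀ a : S, ∃ b, a * b = E ∧ b * a = E)
    (a b c : S) (h : a * b = a * c) : b = c := by
  obtain ⟨a', ha1, ha2⟩ := hinv a
  calc b = E * b := ((hE b).1).symm
    _ = (a' * a) * b := by rw [ha2]
    _ = a' * (a * b) := mul_assoc _ _ _
    _ = a' * (a * c) := by rw [h]
    _ = (a' * a) * c := (mul_assoc _ _ _).symm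
    _ = E * c := by rw [ha2]
    _ = c := (hE c).1

theorem grp_cancel_right (hE : ∀ a : S, E * a = a ∧ a * E = a)
    (hinv : ∀ a : S, ∃ b, a * b = E ∧ b * a = E)
    (a b c : S) (h : b * a = c * a) : b = c := by
  obtain ⟨a', ha1, ha2⟩ := hinv a
  calc b = b * E := ((hE b).2).symm
    _ = b * (a * a') := by rw [ha1]
    _ = (b * a) * a' := (mul_assoc _ _ _).symm
    _ = (c * a) * a' := by rw [h]
    _ = c * (a * a') := mul_assoc _ _ _
    _ = c * E := by rw [ha1]
    _ = c := (hE c).2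

theorem spow_idem (h : E * E = E) (m : ℕ) : spow E m = E := by
  induction m with
  | zero => rfl
  | succ m ih => show E * spow E m = E; rw [ih, h]

/-- In a group, a period identity forces exponent `k + 1`. -/
theorem grp_exp (hE : ∀ a : S, E * a = a ∧ a * E = a)
    (hinv : ∀ a : S, ∃ b, a * b = E ∧ b * a = E)
    {N k : ℕ} {s : S} (h : spow s N = spow s (N + k + 1)) : spow s k = E := by
  have h2 : spow s N * E = spow s N * spow s k := by
    conv_lhs => rw [(hE _).2, h, spow_add]
  exact (grp_cancel_left hE hinv _ _ _ h2).symm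

end GroupHelpers

/-- If `G` is a periodic group variety and `F` is a
combinatorial semigroup variety, then `Gr(G ∨ F) = G`, i.e. `G` is the
greatest group subvariety of `G ∨ F`. -/
theorem Gr_of_join_eq (G F : SgVariety) (hG : IsGroupVariety G)
    (hGper : IsPeriodic G) (hF : IsCombinatorial F) :
    IsGreatest {H : SgVariety | IsGroupVariety H ∧ H ≤ G ⊔ F} G := by
  constructor
  · exact ⟨hG, le_sup_left⟩
  · rintro H ⟨hHgrp, hle⟩
    obtain ⟨n, k, hnk⟩ := hGper
    obtain ⟨c, hc⟩ := exists_aperiodic F hF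
    -- the combined exponent identity, valid in both `G` and `F`
    have hexpG : (spow xw (n + c), spow xw (n + c + k + 1)) ∈ G.th := by
      rw [mem_one_var]; intro S _ hS s
      have h0 : spow s n = spow s (n + k + 1) := mem_one_var.mp hnk S hS s
      have key : ∀ j, spow s (n + j) = spow s (n + j + k + 1) := by
        intro j; induction j with
        | zero => simpa using h0
        | succ j ih =>
            have e1 : spow s (n + (j + 1)) = spow s ((n + j) + 1) :=
              spow_index_congr _ (by omega)
            have e2 : spow s (n + (j + 1) + k + 1) = spow s ((n + j + k + 1) + 1) :=
              spow_index_congr _ (by omega)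
            rw [e1, e2]
            show s * spow s (n + j) = s * spow s (n + j + k + 1)
            rw [ih]
      exact key c
    have hexpF : (spow xw (n + c), spow xw (n + c + k + 1)) ∈ F.th := by
      rw [mem_one_var]; intro S _ hS s
      have h0 : ∀ t : S, spow t c = spow t (c + 1) := mem_one_var.mp hc S hS
      have hj : ∀ j, spow s (c + j) = spow s (c + j + 1) := by
        intro j; induction j with
        | zero => simpa using h0 s
        | succ j ih =>
            have e1 : spow s (c + (j + 1)) = spow s ((c + j) + 1) :=
              spow_index_congr _ (by omega)
            have e2 : spow s (c + (j + 1) + 1) = spow s ((c + j + 1) + 1) :=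
              spow_index_congr _ (by omega)
            rw [e1, e2]
            show s * spow s (c + j) = s * spow s (c + j + 1)
            rw [ih]
      have hchain : ∀ t j, spow s (c + j) = spow s (c + j + t) := by
        intro t; induction t with
        | zero => intro j; simp
        | succ t ih =>
            intro j
            rw [show c + j + (t + 1) = (c + (j + t)) + 1 from by omega, ← hj (j + t),
              show c + (j + t) = c + j + t from by omega]
            exact ih j
      calc spow s (n + c) = spow s (c + n) := spow_index_congr _ (by omega)
        _ = spow s (c + n + (k + 1)) := hchain (k + 1) n
        _ = spow s (n + c + k + 1) := spow_index_congr _ (by omega)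
    -- now the upper-bound argument
    intro e he
    rw [← H.closed]
    intro S _ hS
    rcases isEmpty_or_nonempty S with h0 | h0
    · intro σ; exact (h0.false (σ 0)).elim
    obtain ⟨E, hE, hinv⟩ := hHgrp S h0 hS
    have hexpS : ∀ s : S, spow s k = E := by
      intro s
      have h1 := hS _ (hle ⟨hexpG, hexpF⟩) (fun _ => s)
      simp only [lift_spow_xw] at h1
      exact grp_exp hE hinv h1
    -- the key word and its aperiodicity identity
    set w : Word := e.1 * spow e.2 (2 * k) with hwdef
    have hwG : (spow w c, spow w (c + 1)) ∈ G.th := by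
      rw [← G.closed]
      intro T _ hT σ
      rcases isEmpty_or_nonempty T with h0' | h0'
      · exact (h0'.false (σ 0)).elim
      obtain ⟨ET, hET, hinvT⟩ := hG T h0' hT
      have hUV : FreeSemigroup.lift σ e.1 = FreeSemigroup.lift σ e.2 := hT e he σ
      have hexpT : ∀ t : T, spow t k = ET := by
        intro t
        have h1 := hT _ hnk (fun _ => t)
        simp only [lift_spow_xw] at h1
        exact grp_exp hET hinvT h1
      have hWE : FreeSemigroup.lift σ w = ET := by
        rw [hwdef, map_mul, map_spow, hUV]
        have hrw : FreeSemigroup.lift σ e.2 * spow (FreeSemigroup.lift σ e.2) (2 * k)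
            = spow (FreeSemigroup.lift σ e.2) (2 * k + 1) := rfl
        rw [hrw, spow_index_congr _ (show 2 * k + 1 = k + k + 1 from by omega), spow_add,
          hexpT, (hET ET).1]
      show FreeSemigroup.lift σ (spow w c) = FreeSemigroup.lift σ (spow w (c + 1))
      rw [map_spow, map_spow, hWE, spow_idem ((hET ET).1), spow_idem ((hET ET).1)]
    have hwF : (spow w c, spow w (c + 1)) ∈ F.th := by
      have h1 := mem_subst (V := F) hc (fun _ => w)
      rw [lift_spow_xw, lift_spow_xw] at h1
      exact h1
    -- evaluate in `S`
    intro σ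
    have hW := hS _ (hle ⟨hwG, hwF⟩) σ
    show FreeSemigroup.lift σ e.1 = FreeSemigroup.lift σ e.2
    set U := FreeSemigroup.lift σ e.1 with hU
    set V := FreeSemigroup.lift σ e.2 with hV
    have hWval : FreeSemigroup.lift σ w = U * spow V (2 * k) := by
      rw [hwdef, map_mul, map_spow]
    have hWc : spow (U * spow V (2 * k)) c = spow (U * spow V (2 * k)) (c + 1) := by
      have : FreeSemigroup.lift σ (spow w c) = FreeSemigroup.lift σ (spow w (c + 1)) := hW
      rw [map_spow, map_spow, hWval] at this
      exact this
    have hWE : U * spow V (2 * k) = E := by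
      apply grp_cancel_right hE hinv (spow (U * spow V (2 * k)) c)
      have h1 : (U * spow V (2 * k)) * spow (U * spow V (2 * k)) c
          = spow (U * spow V (2 * k)) c := hWc.symm
      rw [h1, (hE _).1]
    have hVk : spow V (2 * k) * V = E := by
      rw [← spow_succ_right, spow_index_congr _ (show 2 * k + 1 = k + k + 1 from by omega),
        spow_add, hexpS V, (hE E).1]
    have hfin : (U * spow V (2 * k)) * V = E * V := by rw [hWE]
    rw [mul_assoc, hVk, (hE U).2, (hE V).1] at hfin
    exact hfin
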